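/- Let m = 2 and for 0 ≤ i ≤ n_1−1, 0 ≤ j ≤ n_2−1 let Δ_{i,j} := {(e_1,e_2) : 0 ≤ e_1 ≤ i, 0 ≤ e_2 ≤ j} ⊆ E. The monomial-Cartesian code C := C_{Δ_{i,j}}^P has length n = n_1n_2, dimension k = (i+1)(j+1) and minimum distance d = (n_1−i)(n_2−j), and C is an optimal (r,δ)-LRC (with locality obtained by recovery along lines in one coordinate direction, namely (r,δ) = (i+1, n_1−i) when i ≤ n_1−2, or (r,δ) = (j+1, n_2−j) when j ≤ n_2−2) if and only if one of the following holds: (a) i = 0 and 0 ≤ j ≤ n_2−1, with (r,δ) = (1, n_1); (b) 1 ≤ i ≤ n_1−2 and j = n_2−1, with (r,δ) = (i+1, n_1−i); (c) j = 0 and 0 ≤ i ≤ n_1−1, with (r,δ) = (1, n_2); (d) i = n_1−1 and 1 ≤ j ≤ n_2−2, with (r,δ) = (j+1, n_2−j). -/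

import Mathlib

/-- The set of evaluation points `P = P₁ × ⋯ × P_m`. -/
abbrev MCCPt {F : Type*} {m : ℕ} (P : Fin m → Finset F) : Type _ :=
  (j : Fin m) → {x // x ∈ P j}

/-- The evaluation vector of the monomial `X^e` at the points of `P`. -/
def evMon {F : Type*} [Field F] {m : ℕ} (P : Fin m → Finset F) (e : Fin m → ℕ) :
    MCCPt P → F :=
  fun x => ∏ j, (x j : F) ^ e j

/-- The monomial-Cartesian code `C_Δ^P = ev_P(V_Δ)`. -/
def MCC {F : Type*} [Field F] {m : ℕ} (P : Fin m → Finset F) (Δ : Finset (Fin m → ℕ)) :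
    Submodule F (MCCPt P → F) :=
  Submodule.span F (evMon P '' ↑Δ)

/-- The code `C ⊆ F^ι` has minimum Hamming distance exactly `d`. -/
def HasMinDist {F ι : Type*} [Field F] [DecidableEq F] [Fintype ι]
    (C : Submodule F (ι → F)) (d : ℕ) : Prop :=
  (∀ c ∈ C, c ≠ 0 → d ≤ hammingNorm c) ∧ ∃ c ∈ C, c ≠ 0 ∧ hammingNorm c = d

/-- The code `C ⊆ F^ι` is an `(r, δ)`-locally recoverable code. -/
def IsLRC {F ι : Type*} [Field F] [DecidableEq F] [DecidableEq ι] [Fintype ι]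
    (C : Submodule F (ι → F)) (r δ : ℕ) : Prop :=
  ∀ i : ι, ∃ R : Finset ι, i ∈ R ∧ R.card ≤ r + δ - 1 ∧
    ∀ c ∈ C, (∃ j ∈ R, c j ≠ 0) → δ ≤ (R.filter fun j => c j ≠ 0).card

/-- `C` is an optimal `(r, δ)`-LRC with dimension `k` and minimum distance `d`:
it is an `(r, δ)`-LRC attaining the Singleton-like bound
`k + d + (⌈k/r⌉ - 1)(δ - 1) = n + 1`. -/
def IsOptimalLRC {F ι : Type*} [Field F] [DecidableEq F] [DecidableEq ι] [Fintype ι]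
    (C : Submodule F (ι → F)) (k d r δ : ℕ) : Prop :=
  IsLRC C r δ ∧ Module.finrank F C = k ∧ HasMinDist C d ∧
    k + d + ((k + r - 1) / r - 1) * (δ - 1) = Fintype.card ι + 1

/-- The rectangle `Δ_{i,j} = {(e₁,e₂) : 0 ≤ e₁ ≤ i, 0 ≤ e₂ ≤ j}` as a set of exponents. -/
def rectΔ (i j : ℕ) : Finset (Fin 2 → ℕ) :=
  (Finset.range (i + 1) ×ˢ Finset.range (j + 1)).image fun p => ![p.1, p.2]


open Polynomial Finset

section Uni
variable {F : Type*} [Field F] [DecidableEq F]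

private noncomputable def upoly (t : ℕ) (μ : ℕ → F) : F[X] :=
  ∑ a ∈ Finset.range t, Polynomial.monomial a (μ a)

lemma upoly_eval (t : ℕ) (μ : ℕ → F) (x : F) :
    (upoly t μ).eval x = ∑ a ∈ Finset.range t, μ a * x ^ a := by
  simp [upoly, Polynomial.eval_finset_sum]

lemma upoly_coeff (t : ℕ) (μ : ℕ → F) {a : ℕ} (ha : a < t) : (upoly t μ).coeff a = μ a := by
  rw [upoly, Polynomial.finset_sum_coeff]
  simp only [Polynomial.coeff_monomial]
  rw [Finset.sum_ite_eq' (Finset.range t) a μ]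
  simp [ha]

lemma upoly_natDegree_lt (t : ℕ) (μ : ℕ → F) (ht : 0 < t) : (upoly t μ).natDegree < t := by
  have : (upoly t μ).natDegree ≤ t - 1 := by
    apply Polynomial.natDegree_sum_le_of_forall_le
    intro a ha
    exact le_trans (Polynomial.natDegree_monomial_le _) (by
      have := Finset.mem_range.mp ha; omega)
  omega

lemma uni_zero (S : Finset F) (t : ℕ) (μ : ℕ → F) (ht : t ≤ S.card)
    (h : ∀ x ∈ S, ∑ a ∈ Finset.range t, μ a * x ^ a = 0) : ∀ a < t, μ a = 0 := by
  intro a ha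
  have h0 : upoly t μ = 0 := by
    apply Polynomial.eq_zero_of_natDegree_lt_card_of_eval_eq_zero' _ S
    · intro x hx; rw [upoly_eval]; exact h x hx
    · exact lt_of_lt_of_le (upoly_natDegree_lt t μ (by omega)) ht
  have := upoly_coeff t μ ha
  rw [h0] at this; simpa using this.symm

lemma uni_count (S : Finset F) (t : ℕ) (μ : ℕ → F) {a0 : ℕ} (ha0 : a0 < t) (hμ : μ a0 ≠ 0) :
    S.card ≤ (t - 1) + (S.filter fun x => ∑ a ∈ Finset.range t, μ a * x ^ a ≠ 0).card := by
  have hp : upoly t μ ≠ 0 := fun h => hμ (by rw [← upoly_coeff t μ ha0, h, Polynomial.coeff_zero])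
  have hz : (S.filter fun x => ∑ a ∈ Finset.range t, μ a * x ^ a = 0).card ≤ t - 1 := by
    refine le_trans (Polynomial.card_le_degree_of_subset_roots (p := upoly t μ) ?_) ?_
    · intro x hx
      rw [Finset.mem_val, Finset.mem_filter] at hx
      rw [Polynomial.mem_roots hp, Polynomial.IsRoot, upoly_eval]
      exact hx.2
    · have := upoly_natDegree_lt t μ (by omega); omega
  have hsplit := Finset.card_filter_add_card_filter_not
    (s := S) (p := fun x => ∑ a ∈ Finset.range t, μ a * x ^ a = 0)
  simp only [ne_eq]
  omega

lemma prod_filter_card (S T : Finset F) (p : F × F → Prop) [DecidablePred p] :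
    ((S ×ˢ T).filter p).card = ∑ y ∈ T, (S.filter fun x => p (x, y)).card := by
  classical
  have key : (S ×ˢ T).filter p =
      T.biUnion fun y => (S.filter fun x => p (x, y)).map
        ⟨fun x => (x, y), fun a b h => (Prod.ext_iff.mp h).1⟩ := by
    ext z
    simp only [Finset.mem_filter, Finset.mem_product, Finset.mem_biUnion, Finset.mem_map,
      Function.Embedding.coeFn_mk]
    constructor
    · rintro ⟨⟨h1, h2⟩, hp⟩
      exact ⟨z.2, h2, z.1, ⟨h1, hp⟩, rfl⟩
    · rintro ⟨y, hy, x, hx, rfl⟩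
      exact ⟨⟨hx.1, hy⟩, hx.2⟩
  rw [key, Finset.card_biUnion]
  · simp
  · intro y hy y' hy' hne
    simp only [Finset.disjoint_left, Finset.mem_map, Function.Embedding.coeFn_mk]
    rintro z ⟨x, hx, rfl⟩ ⟨x', hx', hzz⟩
    exact hne (Prod.ext_iff.mp hzz).2.symm



lemma rect_zero {F : Type*} [Field F] [DecidableEq F] (S T : Finset F) (i j : ℕ) (lam : ℕ → ℕ → F)
    (hi : i + 1 ≤ S.card) (hj : j + 1 ≤ T.card)
    (h : ∀ x ∈ S, ∀ y ∈ T,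
      ∑ a ∈ Finset.range (i+1), ∑ b ∈ Finset.range (j+1), lam a b * x ^ a * y ^ b = 0) :
    ∀ a < i + 1, ∀ b < j + 1, lam a b = 0 := by
  intro a ha b hb
  have step1 : ∀ y ∈ T, ∑ b ∈ Finset.range (j+1), lam a b * y ^ b = 0 := by
    intro y hy
    refine uni_zero S (i+1) (fun a' => ∑ b ∈ Finset.range (j+1), lam a' b * y ^ b) hi ?_ a ha
    intro x hx
    rw [← h x hx y hy]
    refine Finset.sum_congr rfl fun a' _ => ?_
    rw [Finset.sum_mul]
    exact Finset.sum_congr rfl fun b' _ => by ring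
  exact uni_zero T (j+1) (fun b' => lam a b') hj step1 b hb

lemma rect_count {F : Type*} [Field F] [DecidableEq F] (S T : Finset F) (i j : ℕ) (lam : ℕ → ℕ → F)
    {a0 b0 : ℕ} (ha0 : a0 < i + 1) (hb0 : b0 < j + 1) (hl : lam a0 b0 ≠ 0) :
    (S.card - i) * (T.card - j) ≤ ((S ×ˢ T).filter fun z =>
      ∑ a ∈ Finset.range (i+1), ∑ b ∈ Finset.range (j+1), lam a b * z.1 ^ a * z.2 ^ b ≠ 0).card := by
  classical
  rw [prod_filter_card]
  have hfun : ∀ x y : F, (∑ a ∈ Finset.range (i+1),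
      (∑ b ∈ Finset.range (j+1), lam a b * y ^ b) * x ^ a)
      = ∑ a ∈ Finset.range (i+1), ∑ b ∈ Finset.range (j+1), lam a b * x ^ a * y ^ b := by
    intro x y
    refine Finset.sum_congr rfl fun a _ => ?_
    rw [Finset.sum_mul]
    exact Finset.sum_congr rfl fun b _ => by ring
  have hT'card : T.card - j ≤ (T.filter fun y => ∑ b ∈ Finset.range (j+1), lam a0 b * y ^ b ≠ 0).card := by
    have h1 := uni_count T (j+1) (fun b => lam a0 b) hb0 hl
    beta_reduce at h1
    omega
  have hrow : ∀ y ∈ (T.filter fun y => ∑ b ∈ Finset.range (j+1), lam a0 b * y ^ b ≠ 0), S.card - i ≤ (S.filter fun x =>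
      ∑ a ∈ Finset.range (i+1), ∑ b ∈ Finset.range (j+1), lam a b * x ^ a * y ^ b ≠ 0).card := by
    intro y hy
    rw [Finset.mem_filter] at hy
    have h2 := uni_count S (i+1) (fun a => ∑ b ∈ Finset.range (j+1), lam a b * y ^ b) ha0 hy.2
    beta_reduce at h2
    simp only [hfun] at h2
    omega
  calc (S.card - i) * (T.card - j)
      ≤ (S.card - i) * (T.filter fun y => ∑ b ∈ Finset.range (j+1), lam a0 b * y ^ b ≠ 0).card :=
        Nat.mul_le_mul_left _ hT'card
    _ = ∑ _y ∈ (T.filter fun y => ∑ b ∈ Finset.range (j+1), lam a0 b * y ^ b ≠ 0), (S.card - i) := by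
        rw [Finset.sum_const, smul_eq_mul, Nat.mul_comm]
    _ ≤ ∑ y ∈ (T.filter fun y => ∑ b ∈ Finset.range (j+1), lam a0 b * y ^ b ≠ 0),
        (S.filter fun x => ∑ a ∈ Finset.range (i+1), ∑ b ∈ Finset.range (j+1),
          lam a b * x ^ a * y ^ b ≠ 0).card := Finset.sum_le_sum hrow
    _ ≤ ∑ y ∈ T, (S.filter fun x => ∑ a ∈ Finset.range (i+1), ∑ b ∈ Finset.range (j+1),
          lam a b * x ^ a * y ^ b ≠ 0).card := by
        exact Finset.sum_le_sum_of_subset (Finset.filter_subset _ _)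
end Uni

section MCCTwo
variable {F : Type*} [Field F] [DecidableEq F] (P : Fin 2 → Finset F)

/-- A point of the 2-dimensional grid from its two coordinates. -/
def pt2 {x y : F} (hx : x ∈ P 0) (hy : y ∈ P 1) : MCCPt P :=
  Fin.cons ⟨x, hx⟩ (Fin.cons ⟨y, hy⟩ finZeroElim)

@[simp] lemma pt2_zero {x y : F} (hx : x ∈ P 0) (hy : y ∈ P 1) : pt2 P hx hy 0 = ⟨x, hx⟩ := rfl

@[simp] lemma pt2_one {x y : F} (hx : x ∈ P 0) (hy : y ∈ P 1) : pt2 P hx hy 1 = ⟨y, hy⟩ := rfl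

lemma evMon_two (e : Fin 2 → ℕ) (x : MCCPt P) :
    evMon P e x = (x 0 : F) ^ e 0 * (x 1 : F) ^ e 1 := by
  simp [evMon, Fin.prod_univ_two]

lemma mccpt_ext {x y : MCCPt P} (h0 : (x 0 : F) = (y 0 : F)) (h1 : (x 1 : F) = (y 1 : F)) :
    x = y := by
  funext k
  fin_cases k
  · exact Subtype.ext h0
  · exact Subtype.ext h1

lemma hammingNorm_eq_prod (c : MCCPt P → F) (f : F × F → F)
    (hc : ∀ x : MCCPt P, c x = f ((x 0 : F), (x 1 : F))) :
    hammingNorm c = ((P 0 ×ˢ P 1).filter fun z => f z ≠ 0).card := by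
  classical
  have : hammingNorm c = (Finset.univ.filter fun x : MCCPt P => c x ≠ 0).card := by
    rw [hammingNorm]
  rw [this]
  refine Finset.card_bij (fun x _ => ((x 0 : F), (x 1 : F))) ?_ ?_ ?_
  · intro x hx
    rw [Finset.mem_filter] at hx
    rw [Finset.mem_filter, Finset.mem_product]
    exact ⟨⟨(x 0).2, (x 1).2⟩, by rw [← hc]; exact hx.2⟩
  · intro x _ y _ h
    have h0 := (Prod.ext_iff.mp h).1
    have h1 := (Prod.ext_iff.mp h).2
    exact mccpt_ext P h0 h1
  · intro z hz
    rw [Finset.mem_filter, Finset.mem_product] at hz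
    refine ⟨pt2 P hz.1.1 hz.1.2, ?_, ?_⟩
    · rw [Finset.mem_filter]
      refine ⟨Finset.mem_univ _, ?_⟩
      rw [hc]
      simpa using hz.2
    · simp

/-- The family of monomial evaluation vectors on the rectangle. -/
def vfam (i j : ℕ) : Fin (i+1) × Fin (j+1) → (MCCPt P → F) :=
  fun p => evMon P ![(p.1 : ℕ), (p.2 : ℕ)]

lemma MCC_rect_span (i j : ℕ) :
    MCC P (rectΔ i j) = Submodule.span F (Set.range (vfam P i j)) := by
  rw [MCC]
  congr 1
  ext c
  constructor
  · rintro ⟨e, he, rfl⟩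
    rw [Finset.mem_coe, rectΔ, Finset.mem_image] at he
    obtain ⟨p, hp, rfl⟩ := he
    rw [Finset.mem_product, Finset.mem_range, Finset.mem_range] at hp
    exact ⟨(⟨p.1, hp.1⟩, ⟨p.2, hp.2⟩), rfl⟩
  · rintro ⟨p, rfl⟩
    refine ⟨![(p.1 : ℕ), (p.2 : ℕ)], ?_, rfl⟩
    rw [Finset.mem_coe, rectΔ, Finset.mem_image]
    exact ⟨((p.1 : ℕ), (p.2 : ℕ)), by
      rw [Finset.mem_product, Finset.mem_range, Finset.mem_range]
      exact ⟨p.1.isLt, p.2.isLt⟩, rfl⟩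

/-- Extend a coefficient family on `Fin (i+1) × Fin (j+1)` to `ℕ → ℕ → F`. -/
def liftg (i j : ℕ) (g : Fin (i+1) × Fin (j+1) → F) : ℕ → ℕ → F :=
  fun a b => if h : a < i + 1 ∧ b < j + 1 then g (⟨a, h.1⟩, ⟨b, h.2⟩) else 0

lemma sum_fin_eq_range (i j : ℕ) (g : Fin (i+1) × Fin (j+1) → F) (x0 x1 : F) :
    ∑ p : Fin (i+1) × Fin (j+1), g p * x0 ^ (p.1 : ℕ) * x1 ^ (p.2 : ℕ)
      = ∑ a ∈ Finset.range (i+1), ∑ b ∈ Finset.range (j+1),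
          liftg i j g a b * x0 ^ a * x1 ^ b := by
  rw [Fintype.sum_prod_type]
  rw [← Fin.sum_univ_eq_sum_range
    (fun a => ∑ b ∈ Finset.range (j+1), liftg i j g a b * x0 ^ a * x1 ^ b) (i+1)]
  refine Finset.sum_congr rfl fun a _ => ?_
  rw [← Fin.sum_univ_eq_sum_range
    (fun b => liftg i j g (a : ℕ) b * x0 ^ (a : ℕ) * x1 ^ b) (j+1)]
  refine Finset.sum_congr rfl fun b _ => ?_
  simp [liftg, a.isLt, b.isLt]

lemma vfam_apply (i j : ℕ) (p : Fin (i+1) × Fin (j+1)) (x : MCCPt P) :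
    vfam P i j p x = (x 0 : F) ^ (p.1 : ℕ) * (x 1 : F) ^ (p.2 : ℕ) := by
  rw [vfam, evMon_two]
  simp

lemma mem_MCC_iff (i j : ℕ) (c : MCCPt P → F) :
    c ∈ MCC P (rectΔ i j) ↔ ∃ lam : ℕ → ℕ → F, ∀ x : MCCPt P,
      c x = ∑ a ∈ Finset.range (i+1), ∑ b ∈ Finset.range (j+1),
        lam a b * (x 0 : F) ^ a * (x 1 : F) ^ b := by
  constructor
  · intro hc
    rw [MCC_rect_span, Submodule.mem_span_range_iff_exists_fun] at hc
    obtain ⟨g, hg⟩ := hc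
    refine ⟨liftg i j g, fun x => ?_⟩
    rw [← sum_fin_eq_range]
    have := congrFun hg x
    rw [Finset.sum_apply] at this
    rw [← this]
    refine Finset.sum_congr rfl fun p _ => ?_
    rw [Pi.smul_apply, smul_eq_mul, vfam_apply, mul_assoc]
  · rintro ⟨lam, hlam⟩
    have hc : c = ∑ a ∈ Finset.range (i+1), ∑ b ∈ Finset.range (j+1),
        lam a b • evMon P ![a, b] := by
      funext x
      rw [hlam x, Finset.sum_apply]
      refine Finset.sum_congr rfl fun a _ => ?_
      rw [Finset.sum_apply]
      refine Finset.sum_congr rfl fun b _ => ?_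
      rw [Pi.smul_apply, smul_eq_mul, evMon_two]
      simp [mul_assoc]
    rw [hc]
    refine Submodule.sum_mem _ fun a ha => Submodule.sum_mem _ fun b hb => Submodule.smul_mem _ _ ?_
    apply Submodule.subset_span
    refine ⟨![a, b], ?_, rfl⟩
    rw [Finset.mem_coe, rectΔ, Finset.mem_image]
    exact ⟨(a, b), by rw [Finset.mem_product]; exact ⟨ha, hb⟩, rfl⟩

end MCCTwo

section Main
variable {F : Type*} [Field F] [DecidableEq F] (P : Fin 2 → Finset F)

lemma card_MCCPt : Fintype.card (MCCPt P) = (P 0).card * (P 1).card := by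
  rw [Fintype.card_pi, Fin.prod_univ_two]
  simp [Fintype.card_coe]

lemma lin_indep (i j : ℕ) (hi : i + 1 ≤ (P 0).card) (hj : j + 1 ≤ (P 1).card) :
    LinearIndependent F (vfam P i j) := by
  rw [Fintype.linearIndependent_iff]
  intro g hg p
  have hzero : ∀ x ∈ P 0, ∀ y ∈ P 1, ∑ a ∈ Finset.range (i+1), ∑ b ∈ Finset.range (j+1),
      liftg i j g a b * x ^ a * y ^ b = 0 := by
    intro x hx y hy
    rw [← sum_fin_eq_range]
    have h0 := congrFun hg (pt2 P hx hy)
    rw [Finset.sum_apply] at h0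
    calc ∑ p : Fin (i+1) × Fin (j+1), g p * x ^ (p.1 : ℕ) * y ^ (p.2 : ℕ)
        = ∑ p : Fin (i+1) × Fin (j+1), (g p • vfam P i j p) (pt2 P hx hy) := by
          refine Finset.sum_congr rfl fun q _ => ?_
          rw [Pi.smul_apply, smul_eq_mul, vfam_apply]
          simp [mul_assoc]
      _ = 0 := h0
  have hz := rect_zero (P 0) (P 1) i j (liftg i j g) hi hj hzero
  have hp := hz p.1 p.1.isLt p.2 p.2.isLt
  rw [liftg, dif_pos ⟨p.1.isLt, p.2.isLt⟩] at hp
  simpa using hp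

lemma finrank_MCC (i j : ℕ) (hi : i + 1 ≤ (P 0).card) (hj : j + 1 ≤ (P 1).card) :
    Module.finrank F (MCC P (rectΔ i j)) = (i + 1) * (j + 1) := by
  rw [MCC_rect_span, finrank_span_eq_card (lin_indep P i j hi hj)]
  simp

lemma mindist_lower (i j : ℕ) (c : MCCPt P → F)
    (hc : c ∈ MCC P (rectΔ i j)) (hne : c ≠ 0) :
    ((P 0).card - i) * ((P 1).card - j) ≤ hammingNorm c := by
  classical
  obtain ⟨lam, hlam⟩ := (mem_MCC_iff P i j c).mp hc
  have hex : ∃ a, a < i + 1 ∧ ∃ b, b < j + 1 ∧ lam a b ≠ 0 := by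
    by_contra h
    push_neg at h
    apply hne
    funext x
    rw [hlam x]
    simp only [Pi.zero_apply]
    refine Finset.sum_eq_zero fun a ha => Finset.sum_eq_zero fun b hb => ?_
    rw [h a (Finset.mem_range.mp ha) b (Finset.mem_range.mp hb), zero_mul, zero_mul]
  obtain ⟨a0, ha0, b0, hb0, hl⟩ := hex
  rw [hammingNorm_eq_prod P c
    (fun z => ∑ a ∈ Finset.range (i+1), ∑ b ∈ Finset.range (j+1), lam a b * z.1 ^ a * z.2 ^ b)
    (fun x => hlam x)]
  exact rect_count (P 0) (P 1) i j lam ha0 hb0 hl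

lemma mindist_achieved (i j : ℕ) (hi : i + 1 ≤ (P 0).card) (hj : j + 1 ≤ (P 1).card) :
    ∃ c ∈ MCC P (rectΔ i j), c ≠ 0 ∧
      hammingNorm c = ((P 0).card - i) * ((P 1).card - j) := by
  classical
  obtain ⟨A, hA, hAcard⟩ := Finset.exists_subset_card_eq (show i ≤ (P 0).card by omega)
  obtain ⟨B, hB, hBcard⟩ := Finset.exists_subset_card_eq (show j ≤ (P 1).card by omega)
  set g1 : Polynomial F := ∏ α ∈ A, (Polynomial.X - Polynomial.C α) with hg1
  set g2 : Polynomial F := ∏ β ∈ B, (Polynomial.X - Polynomial.C β) with hg2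
  have hd1 : g1.natDegree = i := by
    rw [hg1, Polynomial.natDegree_prod _ _ fun α _ => Polynomial.X_sub_C_ne_zero α]
    simp [Polynomial.natDegree_X_sub_C, hAcard]
  have hd2 : g2.natDegree = j := by
    rw [hg2, Polynomial.natDegree_prod _ _ fun β _ => Polynomial.X_sub_C_ne_zero β]
    simp [Polynomial.natDegree_X_sub_C, hBcard]
  have hev1 : ∀ x : F, (g1.eval x ≠ 0 ↔ x ∉ A) := by
    intro x
    rw [hg1, Polynomial.eval_prod, Finset.prod_ne_zero_iff]
    constructor
    · intro h hx
      have := h x hx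
      simp at this
    · intro h α hα
      simp only [Polynomial.eval_sub, Polynomial.eval_X, Polynomial.eval_C, sub_ne_zero]
      rintro rfl; exact h hα
  have hev2 : ∀ x : F, (g2.eval x ≠ 0 ↔ x ∉ B) := by
    intro x
    rw [hg2, Polynomial.eval_prod, Finset.prod_ne_zero_iff]
    constructor
    · intro h hx
      have := h x hx
      simp at this
    · intro h β hβ
      simp only [Polynomial.eval_sub, Polynomial.eval_X, Polynomial.eval_C, sub_ne_zero]
      rintro rfl; exact h hβ
  refine ⟨fun x => g1.eval (x 0 : F) * g2.eval (x 1 : F), ?_, ?_, ?_⟩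
  · rw [mem_MCC_iff]
    refine ⟨fun a b => g1.coeff a * g2.coeff b, fun x => ?_⟩
    rw [Polynomial.eval_eq_sum_range' (n := i + 1) (by omega) ((x 0 : F)),
        Polynomial.eval_eq_sum_range' (n := j + 1) (by omega) ((x 1 : F)),
        Finset.sum_mul_sum]
    refine Finset.sum_congr rfl fun a _ => Finset.sum_congr rfl fun b _ => by ring
  · obtain ⟨α, hα⟩ : ((P 0) \ A).Nonempty := by
      rw [← Finset.card_pos, Finset.card_sdiff_of_subset hA]; omega
    obtain ⟨β, hβ⟩ : ((P 1) \ B).Nonempty := by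
      rw [← Finset.card_pos, Finset.card_sdiff_of_subset hB]; omega
    rw [Finset.mem_sdiff] at hα hβ
    intro h0
    have := congrFun h0 (pt2 P hα.1 hβ.1)
    simp only [pt2_zero, pt2_one, Pi.zero_apply] at this
    exact mul_ne_zero ((hev1 α).mpr hα.2) ((hev2 β).mpr hβ.2) this
  · rw [hammingNorm_eq_prod P _ (fun z => g1.eval z.1 * g2.eval z.2) (fun x => rfl)]
    have : ((P 0 ×ˢ P 1).filter fun z => g1.eval z.1 * g2.eval z.2 ≠ 0)
        = ((P 0).filter fun x => g1.eval x ≠ 0) ×ˢ ((P 1).filter fun y => g2.eval y ≠ 0) := by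
      rw [← Finset.filter_product]
      apply Finset.filter_congr
      intro z _
      rw [mul_ne_zero_iff]
    rw [this, Finset.card_product]
    have h1 : ((P 0).filter fun x => g1.eval x ≠ 0) = (P 0) \ A := by
      ext x
      rw [Finset.mem_filter, Finset.mem_sdiff, hev1]
    have h2 : ((P 1).filter fun y => g2.eval y ≠ 0) = (P 1) \ B := by
      ext y
      rw [Finset.mem_filter, Finset.mem_sdiff, hev2]
    rw [h1, h2, Finset.card_sdiff_of_subset hA, Finset.card_sdiff_of_subset hB, hAcard, hBcard]

end Main

lemma arith1 (i j a b : ℕ) :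
    (i+1)*(j+1) + (a+2)*(b+1) + j*(a+1) = (i+a+2)*(j+b+1) + 1 ↔ i = 0 ∨ b = 0 := by
  have hid : (i+a+2)*(j+b+1) + 1 = ((i+1)*(j+1) + (a+2)*(b+1) + j*(a+1)) + i*b := by ring
  rw [hid, left_eq_add, Nat.mul_eq_zero]

lemma arith2 (i j a b : ℕ) :
    (i+1)*(j+1) + (b+1)*(a+2) + i*(a+1) = (i+b+1)*(j+a+2) + 1 ↔ j = 0 ∨ b = 0 := by
  have hid : (i+b+1)*(j+a+2) + 1 = ((i+1)*(j+1) + (b+1)*(a+2) + i*(a+1)) + j*b := by ring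
  rw [hid, left_eq_add, Nat.mul_eq_zero]


/-- For `m = 2` and the rectangle `Δ_{i,j}`, the code `C = C_{Δ_{i,j}}^P`
has length `n₁n₂`, dimension `(i+1)(j+1)` and minimum distance `(n₁-i)(n₂-j)`, and `C` is an
optimal `(r, δ)`-LRC for the locality coming from recovery along one coordinate direction if
and only if one of the four listed conditions holds, with the indicated localities. -/
theorem rect_mcc_optimal_iff
    {F : Type*} [Field F] [Fintype F] [DecidableEq F]
    (P : Fin 2 → Finset F) (hP : ∀ j, 2 ≤ (P j).card)
    (i j : ℕ) (hi : i ≤ (P 0).card - 1) (hj : j ≤ (P 1).card - 1) :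
    Fintype.card (MCCPt P) = (P 0).card * (P 1).card ∧
    Module.finrank F (MCC P (rectΔ i j)) = (i + 1) * (j + 1) ∧
    HasMinDist (MCC P (rectΔ i j)) (((P 0).card - i) * ((P 1).card - j)) ∧
    (((i ≤ (P 0).card - 2 ∧
        IsOptimalLRC (MCC P (rectΔ i j)) ((i + 1) * (j + 1))
          (((P 0).card - i) * ((P 1).card - j)) (i + 1) ((P 0).card - i)) ∨
      (j ≤ (P 1).card - 2 ∧
        IsOptimalLRC (MCC P (rectΔ i j)) ((i + 1) * (j + 1))
          (((P 0).card - i) * ((P 1).card - j)) (j + 1) ((P 1).card - j))) ↔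
    ((i = 0 ∧
        IsOptimalLRC (MCC P (rectΔ i j)) ((i + 1) * (j + 1))
          (((P 0).card - i) * ((P 1).card - j)) 1 (P 0).card) ∨
      (1 ≤ i ∧ i ≤ (P 0).card - 2 ∧ j = (P 1).card - 1 ∧
        IsOptimalLRC (MCC P (rectΔ i j)) ((i + 1) * (j + 1))
          (((P 0).card - i) * ((P 1).card - j)) (i + 1) ((P 0).card - i)) ∨
      (j = 0 ∧
        IsOptimalLRC (MCC P (rectΔ i j)) ((i + 1) * (j + 1))
          (((P 0).card - i) * ((P 1).card - j)) 1 (P 1).card) ∨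
      (i = (P 0).card - 1 ∧ 1 ≤ j ∧ j ≤ (P 1).card - 2 ∧
        IsOptimalLRC (MCC P (rectΔ i j)) ((i + 1) * (j + 1))
          (((P 0).card - i) * ((P 1).card - j)) (j + 1) ((P 1).card - j)))) := by
  have hn1 : 2 ≤ (P 0).card := hP 0
  have hn2 : 2 ≤ (P 1).card := hP 1
  have hi1 : i + 1 ≤ (P 0).card := by omega
  have hj1 : j + 1 ≤ (P 1).card := by omega
  have hcard : Fintype.card (MCCPt P) = (P 0).card * (P 1).card := card_MCCPt P
  refine ⟨hcard, finrank_MCC P i j hi1 hj1,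
    ⟨fun c hc hne => mindist_lower P i j c hc hne, mindist_achieved P i j hi1 hj1⟩, ?_⟩
  have hceil1 : ((i+1)*(j+1) + (i+1) - 1) / (i+1) - 1 = j := by
    have h1 : (i+1)*(j+1) + (i+1) - 1 = (i+1)*(j+1) + i := by omega
    rw [h1, Nat.mul_add_div (by omega), Nat.div_eq_of_lt (by omega)]; omega
  have hceil2 : ((i+1)*(j+1) + (j+1) - 1) / (j+1) - 1 = i := by
    have h1 : (i+1)*(j+1) + (j+1) - 1 = (j+1)*(i+1) + j := by
      rw [Nat.mul_comm]; omega
    rw [h1, Nat.mul_add_div (by omega), Nat.div_eq_of_lt (by omega)]; omega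
  constructor
  · rintro (⟨hii, hopt⟩ | ⟨hjj, hopt⟩)
    · have heq := hopt.2.2.2
      rw [hcard, hceil1] at heq
      obtain ⟨a, ha⟩ : ∃ a, (P 0).card = i + a + 2 := ⟨(P 0).card - i - 2, by omega⟩
      obtain ⟨b, hb⟩ : ∃ b, (P 1).card = j + b + 1 := ⟨(P 1).card - j - 1, by omega⟩
      have h0 : (P 0).card - i = a + 2 := by omega
      have h1 : (P 1).card - j = b + 1 := by omega
      rw [h0, h1, ha, hb] at heq
      have h2 : a + 2 - 1 = a + 1 := rfl
      rw [h2, arith1] at heq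
      rcases heq with h | h
      · left
        subst h
        exact ⟨rfl, by simpa using hopt⟩
      · by_cases hi0 : i = 0
        · left
          subst hi0
          exact ⟨rfl, by simpa using hopt⟩
        · right; left
          exact ⟨by omega, hii, by omega, hopt⟩
    · have heq := hopt.2.2.2
      rw [hcard, hceil2] at heq
      obtain ⟨a, ha⟩ : ∃ a, (P 1).card = j + a + 2 := ⟨(P 1).card - j - 2, by omega⟩
      obtain ⟨b, hb⟩ : ∃ b, (P 0).card = i + b + 1 := ⟨(P 0).card - i - 1, by omega⟩
      have h0 : (P 1).card - j = a + 2 := by omega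
      have h1 : (P 0).card - i = b + 1 := by omega
      rw [h0, h1, ha, hb] at heq
      have h2 : a + 2 - 1 = a + 1 := rfl
      rw [h2, arith2] at heq
      rcases heq with h | h
      · right; right; left
        subst h
        exact ⟨rfl, by simpa using hopt⟩
      · by_cases hj0 : j = 0
        · right; right; left
          subst hj0
          exact ⟨rfl, by simpa using hopt⟩
        · right; right; right
          exact ⟨by omega, by omega, hjj, hopt⟩
  · rintro (⟨hi0, hopt⟩ | ⟨h1i, hii, hjj, hopt⟩ | ⟨hj0, hopt⟩ | ⟨hii, h1j, hjj, hopt⟩)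
    · left
      subst hi0
      exact ⟨by omega, by simpa using hopt⟩
    · left
      exact ⟨hii, hopt⟩
    · right
      subst hj0
      exact ⟨by omega, by simpa using hopt⟩
    · right
      exact ⟨hjj, hopt⟩
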